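/- For every ω ∈ ℝ, let ψ' ∈ ℂ^{({0,1}×{0,1})×({0,1}×{0,1})} be the unit vector ψ' = (1/2)·[ |0⟩⊗|+⟩⊗|00⟩ + |1⟩⊗|+⟩⊗|01⟩ + |+⟩⊗|0⟩⊗|10⟩ + ((|0⟩ + e^{iω}|1⟩)/√2)⊗|1⟩⊗|11⟩ ], where |+⟩ = (|0⟩+|1⟩)/√2 and the first two tensor factors form Alice's register and the last two form Bob's register. Then the reduced density matrix ρ_A ∈ Matrix ({0,1}×{0,1}) ({0,1}×{0,1}) ℂ with entries ρ_A(a,a') = Σ_b ψ'(a,b)·conj(ψ'(a',b)) has eigenvalues, counted with multiplicity, equal to the multiset {(1/4)(1+cos(ω/4)), (1/4)(1−cos(ω/4)), (1/4)(1+sin(ω/4)), (1/4)(1−sin(ω/4))}. -/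

import Mathlib

open scoped BigOperators
open Matrix

noncomputable section

/-- The state `ψ' = (1/2)·[|0⟩⊗|+⟩⊗|00⟩ + |1⟩⊗|+⟩⊗|01⟩ + |+⟩⊗|0⟩⊗|10⟩ +
((|0⟩+e^{iω}|1⟩)/√2)⊗|1⟩⊗|11⟩]`, with Alice's register the first two tensor factors and
Bob's register the last two. -/
def psi' (ω : ℝ) : (Bool × Bool) × (Bool × Bool) → ℂ := fun p =>
  (1 / 2 : ℂ) *
    ((if p.1.1 = false then 1 else 0) * ((1 : ℂ) / (Real.sqrt 2 : ℂ)) *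
        (if p.2 = (false, false) then 1 else 0) +
      (if p.1.1 = true then 1 else 0) * ((1 : ℂ) / (Real.sqrt 2 : ℂ)) *
        (if p.2 = (false, true) then 1 else 0) +
      ((1 : ℂ) / (Real.sqrt 2 : ℂ)) * (if p.1.2 = false then 1 else 0) *
        (if p.2 = (true, false) then 1 else 0) +
      ((if p.1.1 = false then 1 else Complex.exp (Complex.I * ω)) / (Real.sqrt 2 : ℂ)) *
        (if p.1.2 = true then 1 else 0) * (if p.2 = (true, true) then 1 else 0))

/-- The reduced density matrix `ρ_A` of `ψ'` on Alice's register. -/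
def rhoApsi' (ω : ℝ) : Matrix (Bool × Bool) (Bool × Bool) ℂ :=
  Matrix.of fun a a' => ∑ b, psi' ω (a, b) * star (psi' ω (a', b))

open Polynomial


lemma charpoly_diagonal' {n : Type*} [Fintype n] [DecidableEq n]
    (d : n → ℂ) : (Matrix.diagonal d).charpoly = ∏ i, (X - C (d i)) := by
  have h : charmatrix (Matrix.diagonal d) = Matrix.diagonal fun i => X - C (d i) := by
    ext i j
    by_cases hij : i = j
    · subst hij; simp [charmatrix_apply_eq]
    · simp [charmatrix_apply_ne _ _ _ hij, Matrix.diagonal_apply_ne _ hij]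
  rw [Matrix.charpoly, h, Matrix.det_diagonal]

lemma charpoly_conj_unitary {n : Type*} [Fintype n] [DecidableEq n]
    (U A : Matrix n n ℂ) (h1 : star U * U = 1) :
    (star U * A * U).charpoly = A.charpoly := by
  have key : charmatrix (star U * A * U) =
      (star U).map C * charmatrix A * U.map C := by
    unfold charmatrix
    simp only [RingHom.mapMatrix_apply]
    rw [Matrix.mul_sub, Matrix.sub_mul]
    congr 1
    · have hc : (Matrix.scalar n (X : ℂ[X])) * (star U).map C
          = (star U).map C * (Matrix.scalar n (X : ℂ[X])) :=
        (Matrix.scalar_commute (X : ℂ[X]) (fun r => mul_comm _ r) ((star U).map C)).eq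
      rw [← hc, mul_assoc, ← Matrix.map_mul, h1,
        Matrix.map_one _ (map_zero C) (map_one C), mul_one]
    · rw [Matrix.map_mul, Matrix.map_mul]
  have hdet : ((star U).map C).det * (U.map C).det = 1 := by
    rw [← Matrix.det_mul, ← Matrix.map_mul, h1,
      Matrix.map_one _ (map_zero C) (map_one C), Matrix.det_one]
  rw [Matrix.charpoly, Matrix.charpoly, key, Matrix.det_mul, Matrix.det_mul]
  linear_combination (charmatrix A).det * hdet

lemma herm_charpoly {n : Type*} [Fintype n] [DecidableEq n] {A : Matrix n n ℂ}
    (hA : A.IsHermitian) :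
    A.charpoly = ∏ i, (X - C ((hA.eigenvalues i : ℝ) : ℂ)) := by
  have h1 : star (hA.eigenvectorUnitary : Matrix n n ℂ) *
      (hA.eigenvectorUnitary : Matrix n n ℂ) = 1 :=
    mul_eq_one_comm.mp ((Matrix.mem_unitaryGroup_iff).mp hA.eigenvectorUnitary.2)
  have := hA.conjStarAlgAut_star_eigenvectorUnitary
  rw [Unitary.conjStarAlgAut_apply, Unitary.coe_star, star_star] at this
  rw [← charpoly_conj_unitary _ A h1, this, charpoly_diagonal']
  rfl


lemma rho_apply (ω : ℝ) (a a' : Bool × Bool) :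
    rhoApsi' ω a a' =
      psi' ω (a, (false, false)) * star (psi' ω (a', (false, false))) +
      psi' ω (a, (false, true)) * star (psi' ω (a', (false, true))) +
      psi' ω (a, (true, false)) * star (psi' ω (a', (true, false))) +
      psi' ω (a, (true, true)) * star (psi' ω (a', (true, true))) := by
  simp [rhoApsi', Fintype.sum_prod_type, Fintype.sum_bool]
  ring

lemma psi00 (ω : ℝ) (a : Bool × Bool) :
    psi' ω (a, (false, false)) = (1/2) * (if a.1 = false then 1 else 0) * (1/(Real.sqrt 2:ℂ)) := by
  simp [psi']

lemma psi01 (ω : ℝ) (a : Bool × Bool) :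
    psi' ω (a, (false, true)) = (1/2) * (if a.1 = true then 1 else 0) * (1/(Real.sqrt 2:ℂ)) := by
  simp [psi']

lemma psi10 (ω : ℝ) (a : Bool × Bool) :
    psi' ω (a, (true, false)) = (1/2) * (if a.2 = false then 1 else 0) * (1/(Real.sqrt 2:ℂ)) := by
  simp [psi']

lemma psi11 (ω : ℝ) (a : Bool × Bool) :
    psi' ω (a, (true, true)) = (1/2) *
      ((if a.1 = false then 1 else Complex.exp (Complex.I * ω)) / (Real.sqrt 2 : ℂ)) *
      (if a.2 = true then 1 else 0) := by
  simp [psi']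

def e4 : (Bool × Bool) ≃ Fin 4 where
  toFun := fun p => match p with
    | (false, false) => 0
    | (false, true) => 1
    | (true, false) => 2
    | (true, true) => 3
  invFun := ![(false,false),(false,true),(true,false),(true,true)]
  left_inv := by decide
  right_inv := by decide

def M4 (ω : ℝ) : Matrix (Fin 4) (Fin 4) ℂ :=
  !![1/4, 1/8, 1/8, 0;
     1/8, 1/4, 0, Complex.exp (-(Complex.I * ω)) / 8;
     1/8, 0, 1/4, 1/8;
     0, Complex.exp (Complex.I * ω) / 8, 1/8, 1/4]

lemma hre (ω : ℝ) : (Matrix.reindex e4 e4) (rhoApsi' ω) = M4 ω := by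
  have hinv : (((Real.sqrt 2 : ℝ) : ℂ))⁻¹ ^ 2 = (2 : ℂ)⁻¹ := by
    norm_cast
    rw [inv_pow, Real.sq_sqrt] <;> norm_num
  have hstar : star (Complex.exp (Complex.I * ω)) = Complex.exp (-(Complex.I * ω)) := by
    rw [Complex.star_def, ← Complex.exp_conj, _root_.map_mul, Complex.conj_I,
      Complex.conj_ofReal, neg_mul]
  have hexp : Complex.exp (Complex.I * ω) * Complex.exp (-(Complex.I * ω)) = 1 := by
    rw [← Complex.exp_add]; simp
  ext i j
  fin_cases i <;> fin_cases j <;>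
  · simp only [Matrix.reindex_apply, Matrix.submatrix_apply, rho_apply, psi00, psi01, psi10,
      psi11, e4, Equiv.coe_fn_symm_mk, Matrix.cons_val_zero, Matrix.cons_val_one,
      Matrix.head_cons, M4, Matrix.cons_val', Matrix.empty_val', Matrix.cons_val_fin_one]
    simp [Complex.star_def, map_div₀, Complex.conj_ofReal, hstar]
    try ring_nf
    try simp [hinv, hexp]
    try ring_nf
    try norm_num
    try linear_combination hexp * (1/8)

lemma charpoly_M4 (ω : ℝ) :
    (M4 ω).charpoly =
      ((({(1/4)*(1+Real.cos (ω/4)), (1/4)*(1-Real.cos (ω/4)), (1/4)*(1+Real.sin (ω/4)),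
        (1/4)*(1-Real.sin (ω/4))} : Multiset ℝ).map fun r : ℝ => ((r : ℂ))).map
        (fun μ => X - C μ)).prod := by
  have hch : charmatrix (M4 ω) = !![X - C (1/4 : ℂ), -C (1/8:ℂ), -C (1/8:ℂ), -C (0:ℂ);
      -C (1/8:ℂ), X - C (1/4:ℂ), -C (0:ℂ), -C (Complex.exp (-(Complex.I*ω))/8);
      -C (1/8:ℂ), -C (0:ℂ), X - C (1/4:ℂ), -C (1/8:ℂ);
      -C (0:ℂ), -C (Complex.exp (Complex.I*ω)/8), -C (1/8:ℂ), X - C (1/4:ℂ)] := by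
    ext i j
    fin_cases i <;> fin_cases j <;>
      simp [charmatrix_apply, M4, Matrix.diagonal_apply]
  rw [Matrix.charpoly, hch]
  apply Polynomial.funext
  intro x
  have hsc : (Real.sin (ω/4):ℂ)^2 + (Real.cos (ω/4):ℂ)^2 = 1 := by
    norm_cast
    exact Real.sin_sq_add_cos_sq _
  have huv : Complex.exp (Complex.I*ω) * Complex.exp (-(Complex.I*ω)) = 1 := by
    rw [← Complex.exp_add]; simp
  have hr : Real.cos ω = 1 - 8 * Real.sin (ω/4)^2 * Real.cos (ω/4)^2 := by
    have h4 : ω = 2*(2*(ω/4)) := by ring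
    nth_rewrite 1 [h4]
    rw [Real.cos_two_mul, Real.cos_two_mul]
    linear_combination (8 * Real.cos (ω/4)^2) * Real.sin_sq_add_cos_sq (ω/4)
  have hsum : Complex.exp (Complex.I*ω) + Complex.exp (-(Complex.I*ω))
      = 2 - 16 * (Real.sin (ω/4):ℂ)^2 * (Real.cos (ω/4):ℂ)^2 := by
    have h2c : Complex.exp (Complex.I*ω) + Complex.exp (-(Complex.I*ω))
        = 2*((Real.cos ω : ℝ):ℂ) := by
      rw [Complex.ofReal_cos]
      simp only [Complex.cos]
      rw [mul_comm Complex.I (ω:ℂ), neg_mul]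
      ring
    rw [h2c, hr]
    push_cast
    ring
  simp [Matrix.det_succ_row_zero, Fin.sum_univ_succ, Fin.succAbove, Multiset.insert_eq_cons]
  push_cast at hsc hsum ⊢
  linear_combination (-3/4096 + x/128 - x^2/64 : ℂ) * huv + (-1/4096 : ℂ) * hsum
    + (1/256 - x/32 + x^2/16 : ℂ) * hsc

/-- The eigenvalues of `ρ_A`, counted with multiplicity, are
`{(1/4)(1±cos(ω/4)), (1/4)(1±sin(ω/4))}`. -/
theorem eigenvalues_rhoApsi' (ω : ℝ) :
    ∃ h : (rhoApsi' ω).IsHermitian,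
      Multiset.map h.eigenvalues Finset.univ.val =
        ({(1 / 4) * (1 + Real.cos (ω / 4)), (1 / 4) * (1 - Real.cos (ω / 4)),
          (1 / 4) * (1 + Real.sin (ω / 4)), (1 / 4) * (1 - Real.sin (ω / 4))} :
          Multiset ℝ) := by
  have h : (rhoApsi' ω).IsHermitian := by
    ext i j
    simp only [rhoApsi', Matrix.conjTranspose_apply, Matrix.of_apply, star_sum]
    exact Finset.sum_congr rfl fun b _ => by rw [StarMul.star_mul, star_star]
  refine ⟨h, ?_⟩
  have hc : (rhoApsi' ω).charpoly =
      ((({(1/4)*(1+Real.cos (ω/4)), (1/4)*(1-Real.cos (ω/4)), (1/4)*(1+Real.sin (ω/4)),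
        (1/4)*(1-Real.sin (ω/4))} : Multiset ℝ).map fun r : ℝ => ((r : ℂ))).map
        (fun μ => X - C μ)).prod := by
    rw [← Matrix.charpoly_reindex e4, hre, charpoly_M4]
  have hc2 : (rhoApsi' ω).charpoly =
      (((Multiset.map h.eigenvalues Finset.univ.val).map fun r : ℝ => (r:ℂ)).map
        fun μ => X - C μ).prod := by
    rw [herm_charpoly h, Finset.prod_eq_multiset_prod, Multiset.map_map, Multiset.map_map]
    rfl
  have heq := hc2.symm.trans hc
  have h2 := congrArg Polynomial.roots heq
  rw [Polynomial.roots_multiset_prod_X_sub_C, Polynomial.roots_multiset_prod_X_sub_C] at h2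
  exact Multiset.map_injective Complex.ofReal_injective h2
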